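/- Let G be a finite group with a normal subgroup N such that G/N is a p-group, and let k be an algebraically closed field of characteristic p. Then for every block (primitive central idempotent) b of kN, there is exactly one block of kG that covers b, i.e. exactly one primitive central idempotent d of kG with db ≠ 0. -/

import Mathlib

/-- A block of a ring: a primitive central idempotent. -/
def IsBlockOf (R : Type*) [Ring R] (b : R) : Prop :=
  b ∈ Set.center R ∧ IsIdempotentElem b ∧ b ≠ 0 ∧
    ∀ e f : R, e ∈ Set.center R → f ∈ Set.center R → IsIdempotentElem e →
      IsIdempotentElem f → e * f = 0 → b = e + f → e = 0 ∨ f = 0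

namespace BlockAux

open MonoidAlgebra
open scoped Classical

lemma cent' {R : Type*} [Ring R] {a : R} (h : a ∈ Set.center R) : ∀ w : R, w * a = a * w :=
  Semigroup.mem_center_iff.mp h

section RingLemmas
variable {R : Type*} [Ring R]

lemma sub_mem_center {a b : R} (ha : a ∈ Set.center R) (hb : b ∈ Set.center R) :
    a - b ∈ Set.center R := by
  rw [sub_eq_add_neg]; exact Set.add_mem_center ha (Set.neg_mem_center hb)

/-- A block eats central idempotents: `d * u = 0` or `d * u = d`. -/
lemma block_mul_central {d u : R} (hd : IsBlockOf R d) (huc : u ∈ Set.center R)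
    (hui : IsIdempotentElem u) : d * u = 0 ∨ d * u = d := by
  obtain ⟨hdc, hdi, -, hdp⟩ := hd
  have hud : d * u = u * d := cent' huc d
  have hcc : d * u ∈ Set.center R := Set.mul_mem_center hdc huc
  have hci : IsIdempotentElem (d * u) := by
    rw [IsIdempotentElem, mul_assoc d u (d*u), ← mul_assoc u d (u), ← hud, mul_assoc d u u,
      hui, ← mul_assoc, hdi]
  have hdcz : d * (d * u) = d * u := by rw [← mul_assoc, hdi]
  have hcdz : (d * u) * d = d * u := by rw [mul_assoc, ← hud, ← mul_assoc, hdi]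

  have h1 : IsIdempotentElem (d - d * u) := by
    rw [IsIdempotentElem, mul_sub, sub_mul, sub_mul, hdi, hci, hdcz, hcdz]; abel
  have h2 : (d * u) * (d - d * u) = 0 := by rw [mul_sub, hcdz, hci]; abel
  rcases hdp (d * u) (d - d * u) hcc (sub_mem_center hdc hcc) hci h1 h2 (by abel) with h0 | h0
  · exact Or.inl h0
  · exact Or.inr (by rw [sub_eq_zero] at h0; exact h0.symm)

/-- Distinct blocks are orthogonal. -/
lemma block_eq_of_mul_ne_zero {d d' : R} (hd : IsBlockOf R d) (hd' : IsBlockOf R d')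
    (h : d * d' ≠ 0) : d = d' := by
  have h1 := block_mul_central hd hd'.1 hd'.2.1
  have h2 := block_mul_central hd' hd.1 hd.2.1
  have hdd : d * d' = d' * d := cent' hd'.1 d
  rcases h1 with h1 | h1; · exact absurd h1 h
  rcases h2 with h2 | h2; · rw [← hdd] at h2; exact absurd h2 h
  exact h1.symm.trans (hdd.trans h2)

end RingLemmas

section Decomp
variable {k : Type*} [Field k] {R : Type*} [Ring R] [Algebra k R]

/-- the `k`-span of central elements fixed by right multiplication by `e`. -/
noncomputable def Wspan (k : Type*) [Field k] {R : Type*} [Ring R] [Algebra k R] (e : R) :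
    Submodule k R :=
  Submodule.span k {x | x ∈ Set.center R ∧ x * e = x}

/-- the submodule of elements fixed by right multiplication by `e`. -/
def fixedBy (k : Type*) [Field k] {R : Type*} [Ring R] [Algebra k R] (e : R) :
    Submodule k R where
  carrier := {w | w * e = w}
  add_mem' := fun {a b} ha hb => by
    simp only [Set.mem_setOf_eq] at *; rw [add_mul, ha, hb]
  zero_mem' := by simp
  smul_mem' := fun c a ha => by
    simp only [Set.mem_setOf_eq] at *; rw [smul_mul_assoc, ha]

lemma Wspan_le_fixedBy (e : R) : Wspan k e ≤ fixedBy k e :=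
  Submodule.span_le.mpr (fun x hx => hx.2)

lemma exists_blocks_sum [FiniteDimensional k R] :
    ∀ (n : ℕ) (e : R), e ∈ Set.center R → IsIdempotentElem e →
      Module.finrank k (Wspan k e) ≤ n →
      ∃ l : Multiset R, (∀ d ∈ l, IsBlockOf R d) ∧ l.sum = e := by
  intro n
  induction n using Nat.strong_induction_on with
  | _ n IH =>
    intro e hec hei hrank
    by_cases he0 : e = 0
    · exact ⟨0, by simp, by simp [he0]⟩
    by_cases heb : IsBlockOf R e
    · exact ⟨{e}, by simpa using heb, by simp⟩
    have hD : ∃ f g : R, f ∈ Set.center R ∧ g ∈ Set.center R ∧ IsIdempotentElem f ∧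
        IsIdempotentElem g ∧ f * g = 0 ∧ e = f + g ∧ f ≠ 0 ∧ g ≠ 0 := by
      by_contra hcon
      push_neg at hcon
      apply heb
      refine ⟨hec, hei, he0, fun f g hfc hgc hfi hgi hfg hsum => ?_⟩
      by_contra hne
      push_neg at hne
      obtain ⟨hf0, hg0⟩ := hne
      exact hg0 (hcon f g hfc hgc hfi hgi hfg hsum hf0)
    obtain ⟨f, g, hfc, hgc, hfi, hgi, hfg, hsum, hf0, hg0⟩ := hD
    have hgf : g * f = 0 := by
      have := Semigroup.mem_center_iff.mp hgc f; rw [← this, hfg]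
    -- key : Wspan of each part is strictly smaller
    have key : ∀ f' g' : R, f' ∈ Set.center R → g' ∈ Set.center R → IsIdempotentElem f' →
        IsIdempotentElem g' → f' * g' = 0 → g' * f' = 0 → e = f' + g' → g' ≠ 0 →
        Wspan k f' < Wspan k e := by
      intro f' g' hfc' hgc' hfi' hgi' hfg' hgf' hsum' hg0'
      have hfe : f' * e = f' := by rw [hsum', mul_add, hfi', hfg', add_zero]
      have hle : Wspan k f' ≤ Wspan k e := by
        apply Submodule.span_mono
        rintro x ⟨hxc, hxf⟩
        exact ⟨hxc, by rw [← hxf, mul_assoc, hfe]⟩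
      have hge : g' ∈ Wspan k e := Submodule.subset_span
        ⟨hgc', by rw [hsum', mul_add, hgf', hgi', zero_add]⟩
      have hgnot : g' ∉ Wspan k f' := by
        intro hmem
        have := Wspan_le_fixedBy f' hmem
        simp only [fixedBy, Submodule.mem_mk, AddSubmonoid.mem_mk, AddSubsemigroup.mem_mk,
          Set.mem_setOf_eq] at this
        exact hg0' (by rw [← this, hgf'])
      exact lt_of_le_of_ne hle (fun h => hgnot (h ▸ hge))
    have hltf := key f g hfc hgc hfi hgi hfg hgf hsum hg0
    have hltg := key g f hgc hfc hgi hfi hgf hfg (by rw [hsum, add_comm]) hf0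
    have hrf : Module.finrank k (Wspan k f) < n :=
      lt_of_lt_of_le (Submodule.finrank_lt_finrank_of_lt hltf) hrank
    have hrg : Module.finrank k (Wspan k g) < n :=
      lt_of_lt_of_le (Submodule.finrank_lt_finrank_of_lt hltg) hrank
    obtain ⟨l₁, hl₁, hs₁⟩ := IH _ hrf f hfc hfi le_rfl
    obtain ⟨l₂, hl₂, hs₂⟩ := IH _ hrg g hgc hgi le_rfl
    refine ⟨l₁ + l₂, ?_, by rw [Multiset.sum_add, hs₁, hs₂, hsum]⟩
    intro d hd
    rcases Multiset.mem_add.mp hd with hd | hd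
    · exact hl₁ d hd
    · exact hl₂ d hd

lemma exists_blocks_sum_one (k : Type*) [Field k] (R : Type*) [Ring R] [Algebra k R]
    [FiniteDimensional k R] :
    ∃ l : Multiset R, (∀ d ∈ l, IsBlockOf R d) ∧ l.sum = 1 :=
  exists_blocks_sum (Module.finrank k (Wspan k (1:R))) 1 (Set.one_mem_center)
    (by simp [IsIdempotentElem]) le_rfl

end Decomp

section Grading
variable {k : Type*} [Field k] {G Q : Type*} [Group G] [Group Q]

section Fiber

/-- The component of `u` over the fiber of `f` at `x`. -/
noncomputable def cpt (f : G →* Q) (x : Q) (u : MonoidAlgebra k G) : MonoidAlgebra k G :=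
  MonoidAlgebra.ofCoeff <| Finsupp.onFinset u.coeff.support (fun g => if f g = x then u.coeff g else 0)
    (fun g h => by
      rw [Finsupp.mem_support_iff]
      intro h0
      apply h
      simp [h0])

variable (f : G →* Q)

lemma cpt_apply (x : Q) (u : MonoidAlgebra k G) (g : G) :
    (cpt f x u).coeff g = if f g = x then u.coeff g else 0 := by
  rw [cpt, MonoidAlgebra.coeff_ofCoeff, Finsupp.onFinset_apply]

lemma support_cpt (u : MonoidAlgebra k G) (x : Q) :
    ∀ g ∈ (cpt f x u).coeff.support, f g = x := by
  intro g hg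
  rw [Finsupp.mem_support_iff, cpt_apply] at hg
  by_contra h
  rw [if_neg h] at hg
  exact hg rfl

lemma cpt_eq_self {u : MonoidAlgebra k G} {x : Q} (h : ∀ g ∈ u.coeff.support, f g = x) :
    cpt f x u = u := by
  ext g
  rw [cpt_apply]
  by_cases hg : f g = x
  · rw [if_pos hg]
  · rw [if_neg hg]
    by_contra h0
    exact hg (h g (Finsupp.mem_support_iff.mpr (fun hh => h0 hh.symm)))

lemma cpt_eq_zero {u : MonoidAlgebra k G} {x y : Q} (hxy : y ≠ x)
    (h : ∀ g ∈ u.coeff.support, f g = y) : cpt f x u = 0 := by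
  ext g
  rw [cpt_apply]
  by_cases hg : f g = x
  · rw [if_pos hg]
    by_contra h0
    exact hxy (((h g (Finsupp.mem_support_iff.mpr h0)).symm.trans hg))
  · rw [if_neg hg]; rfl

lemma cpt_add (x : Q) (u v : MonoidAlgebra k G) :
    cpt f x (u + v) = cpt f x u + cpt f x v := by
  ext g
  have h1 : (cpt f x u + cpt f x v).coeff g = (cpt f x u).coeff g + (cpt f x v).coeff g := rfl
  have h2 : (u + v).coeff g = u.coeff g + v.coeff g := rfl
  rw [cpt_apply, h1, cpt_apply, cpt_apply, h2]
  split <;> simp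

/-- sum of fiber components recovers the element -/
lemma sum_cpt [Fintype Q] (u : MonoidAlgebra k G) :
    ∑ x : Q, cpt f x u = u := by
  ext g
  rw [MonoidAlgebra.coeff_sum, Finsupp.finset_sum_apply]
  simp only [cpt_apply]
  rw [Finset.sum_ite_eq Finset.univ (f g) (fun _ => u.coeff g)]
  simp

/-- uniqueness of fiber decompositions -/
lemma cpt_sum_fiber [Fintype Q] (t : Q → MonoidAlgebra k G)
    (h : ∀ x, ∀ g ∈ (t x).coeff.support, f g = x) (x₀ : Q) :
    cpt f x₀ (∑ x : Q, t x) = t x₀ := by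
  have hadd : ∀ (s : Finset Q), cpt f x₀ (∑ x ∈ s, t x) = ∑ x ∈ s, cpt f x₀ (t x) := by
    intro s
    induction s using Finset.induction with
    | empty => ext g; simp [cpt_apply]
    | @insert a s hns ih => rw [Finset.sum_insert hns, Finset.sum_insert hns, cpt_add, ih]
  rw [hadd]
  rw [Finset.sum_eq_single x₀]
  · exact cpt_eq_self f (h x₀)
  · intro x _ hx
    exact cpt_eq_zero f hx (h x)
  · intro h0; exact absurd (Finset.mem_univ x₀) h0

lemma support_mul_fiber {u v : MonoidAlgebra k G} {x y : Q}
    (hu : ∀ g ∈ u.coeff.support, f g = x) (hv : ∀ g ∈ v.coeff.support, f g = y) :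
    ∀ g ∈ (u * v).coeff.support, f g = x * y := by
  intro g hg
  have := MonoidAlgebra.support_coeff_mul_subset u v hg
  obtain ⟨a, ha, b, hb, rfl⟩ := Finset.mem_mul.1 this
  rw [map_mul, hu a ha, hv b hb]

lemma support_pow_fiber {u : MonoidAlgebra k G} {x : Q}
    (hu : ∀ g ∈ u.coeff.support, f g = x) :
    ∀ m : ℕ, ∀ g ∈ (u ^ (m + 1)).coeff.support, f g = x ^ (m + 1) := by
  intro m
  induction m with
  | zero => simpa using hu
  | succ m ih =>
      have := support_mul_fiber f ih hu
      rw [← pow_succ] at this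
      intro g hg
      rw [pow_succ x]
      exact this g hg

/-- an element commuting with every `single g 1` is central -/
lemma central_of_commute_single (a : MonoidAlgebra k G)
    (h : ∀ g : G, MonoidAlgebra.single g (1:k) * a = a * MonoidAlgebra.single g 1) :
    a ∈ Set.center (MonoidAlgebra k G) := by
  rw [Semigroup.mem_center_iff]
  intro w
  induction w using MonoidAlgebra.induction_linear with
  | zero => simp
  | add u v hu hv => rw [add_mul, mul_add, hu, hv]
  | single g r =>
      have hs : (MonoidAlgebra.single g r : MonoidAlgebra k G) = r • MonoidAlgebra.single g (1:k) := by
        rw [MonoidAlgebra.smul_single, smul_eq_mul, mul_one]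
      rw [hs, smul_mul_assoc, mul_smul_comm, h g]

/-- fiber components of central elements are central (abelian quotient case) -/
lemma cpt_center [Fintype Q] (hcomm : ∀ a b : Q, a * b = b * a)
    {z : MonoidAlgebra k G} (hz : z ∈ Set.center (MonoidAlgebra k G)) (x : Q) :
    cpt f x z ∈ Set.center (MonoidAlgebra k G) := by
  apply central_of_commute_single
  intro g
  have hzg : MonoidAlgebra.single g (1:k) * z = z * MonoidAlgebra.single g 1 :=
    cent' hz (MonoidAlgebra.single g 1)
  have hsupp_single : ∀ g' ∈ (MonoidAlgebra.single g (1:k)).coeff.support, f g' = f g := by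
    intro g' hg'
    have := Finsupp.support_single_subset hg'
    simp only [Finset.mem_singleton] at this
    rw [this]
  have hL : cpt f (f g * x) (MonoidAlgebra.single g (1:k) * z)
      = MonoidAlgebra.single g (1:k) * cpt f x z := by
    have hdec : MonoidAlgebra.single g (1:k) * z
        = ∑ x' : Q, MonoidAlgebra.single g (1:k) * cpt f ((f g)⁻¹ * x') z := by
      rw [← Finset.mul_sum]
      congr 1
      conv_lhs => rw [← sum_cpt f z]
      refine Fintype.sum_equiv (Equiv.mulLeft (f g)) (fun y => cpt f y z)
        (fun x' => cpt f ((f g)⁻¹ * x') z) (fun y => ?_)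
      simp only [Equiv.coe_mulLeft, inv_mul_cancel_left]
    rw [hdec, cpt_sum_fiber f _ ?_ (f g * x)]
    · rw [inv_mul_cancel_left]
    · intro x'
      have := support_mul_fiber f hsupp_single (support_cpt f z ((f g)⁻¹ * x'))
      rw [mul_inv_cancel_left] at this
      exact this
  have hR : cpt f (f g * x) (z * MonoidAlgebra.single g (1:k))
      = cpt f x z * MonoidAlgebra.single g (1:k) := by
    have hdec : z * MonoidAlgebra.single g (1:k)
        = ∑ x' : Q, cpt f (x' * (f g)⁻¹) z * MonoidAlgebra.single g (1:k) := by
      rw [← Finset.sum_mul]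
      congr 1
      conv_lhs => rw [← sum_cpt f z]
      refine Fintype.sum_equiv (Equiv.mulRight (f g)) (fun y => cpt f y z)
        (fun x' => cpt f (x' * (f g)⁻¹) z) (fun y => ?_)
      simp only [Equiv.coe_mulRight, mul_inv_cancel_right]
    rw [hdec, cpt_sum_fiber f _ ?_ (f g * x)]
    · congr 2
      rw [hcomm (f g) x, mul_inv_cancel_right]
    · intro x'
      have := support_mul_fiber f (support_cpt f z (x' * (f g)⁻¹)) hsupp_single
      rw [inv_mul_cancel_right] at this
      exact this
  rw [← hL, hzg, hR]

end Fiber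

end Grading

section Ab
variable {k : Type*} [Field k]

/-- characteristic of a monoid algebra -/
lemma charP_monoidAlgebra (p : ℕ) [CharP k p] (G : Type*) [Group G] :
    CharP (MonoidAlgebra k G) p :=
  charP_of_injective_ringHom (f := MonoidAlgebra.singleOneRingHom)
    (fun a b hab => by
      have h2 : (MonoidAlgebra.single (1:G) a : MonoidAlgebra k G) = MonoidAlgebra.single 1 b := by
        simpa [MonoidAlgebra.singleOneRingHom] using hab
      have := congrArg (fun v : MonoidAlgebra k G => v.coeff 1) h2
      simpa using this) p

/-- freshman's dream for sums of pairwise commuting elements -/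
lemma sum_pow_char_pow {R : Type*} [Ring R] (p : ℕ) [Fact p.Prime] [CharP R p] (n : ℕ)
    {ι : Type*} (s : Finset ι) (t : ι → R)
    (h : ∀ i ∈ s, ∀ j ∈ s, Commute (t i) (t j)) :
    (∑ i ∈ s, t i) ^ p ^ n = ∑ i ∈ s, t i ^ p ^ n := by
  induction s using Finset.induction with
  | empty => simp [zero_pow (pow_ne_zero n (Nat.Prime.ne_zero Fact.out))]
  | @insert a s hns ih =>
      rw [Finset.sum_insert hns, Finset.sum_insert hns]
      have hcomm : Commute (t a) (∑ i ∈ s, t i) :=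
        Commute.sum_right s _ _ (fun i hi =>
          h a (Finset.mem_insert_self a s) i (Finset.mem_insert_of_mem hi))
      rw [add_pow_char_pow_of_commute _ _ hcomm,
        ih (fun i hi j hj => h i (Finset.mem_insert_of_mem hi) j (Finset.mem_insert_of_mem hj))]

section MapDomain

variable {G : Type*} [Group G] (M : Subgroup G)

lemma support_mapDomain (c : MonoidAlgebra k ↥M) :
    ∀ g ∈ ((MonoidAlgebra.mapDomainRingHom k M.subtype c) :
      MonoidAlgebra k G).coeff.support, g ∈ M := by
  intro g hg
  have h1 : ((MonoidAlgebra.mapDomainRingHom k M.subtype c) : MonoidAlgebra k G).coeff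
      = Finsupp.mapDomain (⇑M.subtype) c.coeff := rfl
  rw [h1] at hg
  have := Finsupp.mapDomain_support hg
  rw [Finset.mem_image] at this
  obtain ⟨m, _, rfl⟩ := this
  exact m.2

lemma mapDomain_injective' :
    Function.Injective (MonoidAlgebra.mapDomainRingHom k (M := ↥M) M.subtype) := by
  intro a b hab
  have h1 : ∀ c : MonoidAlgebra k ↥M,
      ((MonoidAlgebra.mapDomainRingHom k M.subtype c) : MonoidAlgebra k G)
      = MonoidAlgebra.mapDomain (⇑M.subtype) c := fun _ => rfl
  rw [h1, h1] at hab
  exact MonoidAlgebra.mapDomain_injective M.subtype_injective hab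

/-- an element supported in a subgroup comes from its monoid algebra -/
lemma exists_preimage_of_support (y : MonoidAlgebra k G) (h : ∀ g ∈ y.coeff.support, g ∈ M) :
    ∃ y' : MonoidAlgebra k ↥M, (MonoidAlgebra.mapDomainRingHom k M.subtype y' :
      MonoidAlgebra k G) = y := by
  refine ⟨MonoidAlgebra.ofCoeff (Finsupp.subtypeDomain (fun g => g ∈ M) y.coeff), ?_⟩
  have h1 : ((MonoidAlgebra.mapDomainRingHom k M.subtype
      (MonoidAlgebra.ofCoeff (Finsupp.subtypeDomain (fun g => g ∈ M) y.coeff))) : MonoidAlgebra k G).coeff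
      = Finsupp.mapDomain (⇑M.subtype) (Finsupp.subtypeDomain (fun g => g ∈ M) y.coeff) := rfl
  ext g
  rw [h1]
  by_cases hg : g ∈ M
  · have : g = M.subtype ⟨g, hg⟩ := rfl
    rw [this, Finsupp.mapDomain_apply M.subtype_injective]
    rfl
  · have h2 : g ∉ (Finsupp.mapDomain (⇑M.subtype)
        (Finsupp.subtypeDomain (fun g => g ∈ M) y.coeff)).support := by
      intro hmem
      have := Finsupp.mapDomain_support hmem
      rw [Finset.mem_image] at this
      obtain ⟨m, _, rfl⟩ := this
      exact hg m.2
    rw [Finsupp.notMem_support_iff.mp h2]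
    have h3 : g ∉ y.coeff.support := fun hmem => hg (h g hmem)
    rw [Finsupp.notMem_support_iff.mp h3]

end MapDomain

/-- **Core step**: if `G/M` is an abelian `p`-group, every central idempotent of `kG`
acts as `0` or `1` on (the image of) each block of `kM`. -/
lemma abelian_step (p : ℕ) [Fact p.Prime] [CharP k p]
    {G : Type*} [Group G] [Fintype G] (M : Subgroup G) [M.Normal]
    (hcomm : ∀ a b : G ⧸ M, a * b = b * a) (hquot : IsPGroup p (G ⧸ M))
    (c : MonoidAlgebra k ↥M) (hc : IsBlockOf _ c)
    (z : MonoidAlgebra k G) (hz : z ∈ Set.center (MonoidAlgebra k G))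
    (hzi : IsIdempotentElem z) :
    z * MonoidAlgebra.mapDomainRingHom k M.subtype c = 0 ∨
      z * MonoidAlgebra.mapDomainRingHom k M.subtype c
        = MonoidAlgebra.mapDomainRingHom k M.subtype c := by
  haveI : CharP (MonoidAlgebra k G) p := charP_monoidAlgebra p G
  haveI : Fintype (G ⧸ M) := Fintype.ofFinite _
  obtain ⟨n, hn⟩ := IsPGroup.iff_card.mp hquot
  rw [Nat.card_eq_fintype_card] at hn
  set f := QuotientGroup.mk' M with hf
  set C : MonoidAlgebra k G := MonoidAlgebra.mapDomainRingHom k M.subtype c with hC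
  set y := z * C with hy
  have hCsupp : ∀ g ∈ C.coeff.support, f g = 1 := by
    intro g hg
    exact (QuotientGroup.eq_one_iff g).mpr (support_mapDomain M c g hg)
  have hCC : C * C = C := by
    rw [hC, ← map_mul, hc.2.1]
  have hzC : C * z = z * C := cent' hz C
  have hycpt : ∀ x : G ⧸ M, cpt f x y = cpt f x z * C := by
    intro x
    have hdec : y = ∑ x' : G ⧸ M, cpt f x' z * C := by
      rw [← Finset.sum_mul, sum_cpt f z]
    rw [hdec, cpt_sum_fiber f _ ?_ x]
    intro x'
    have h1 := support_mul_fiber f (support_cpt f z x') hCsupp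
    intro g hg
    rw [← mul_one x']
    exact h1 g hg
  have hzx_central : ∀ x, cpt f x z ∈ Set.center (MonoidAlgebra k G) :=
    fun x => cpt_center f hcomm hz x
  have hcommute : ∀ x ∈ (Finset.univ : Finset (G ⧸ M)), ∀ x' ∈ Finset.univ,
      Commute (cpt f x y) (cpt f x' y) := by
    intro x _ x' _
    rw [hycpt x, hycpt x']
    have e1 : ∀ u v : MonoidAlgebra k G, u ∈ Set.center (MonoidAlgebra k G) →
        v ∈ Set.center (MonoidAlgebra k G) → u * C * (v * C) = (u * v) * (C * C) := by
      intro u v hu hv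
      rw [mul_assoc u C (v * C), ← mul_assoc C v C, cent' hv C, mul_assoc v C C,
        ← mul_assoc u v (C*C)]
    show cpt f x z * C * (cpt f x' z * C) = cpt f x' z * C * (cpt f x z * C)
    rw [e1 _ _ (hzx_central x) (hzx_central x'), e1 _ _ (hzx_central x') (hzx_central x),
      cent' (hzx_central x) (cpt f x' z)]
  have hyi : IsIdempotentElem y := by
    have h1 : z * C * (z * C) = z * C := by
      rw [mul_assoc z C (z*C), ← mul_assoc C z C, hzC, mul_assoc z C C, hCC,
        ← mul_assoc z z C, hzi]
    exact h1
  have hq0 : p ^ n ≠ 0 := pow_ne_zero n (Nat.Prime.ne_zero Fact.out)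
  obtain ⟨m, hm⟩ := Nat.exists_eq_succ_of_ne_zero hq0
  rw [Nat.succ_eq_add_one] at hm
  have hypow : y = ∑ x : G ⧸ M, (cpt f x y) ^ p ^ n := by
    conv_lhs => rw [← IsIdempotentElem.pow_succ_eq m hyi, ← hm, ← sum_cpt f y]
    exact sum_pow_char_pow p n Finset.univ _ hcommute
  have hysupp : ∀ g ∈ y.coeff.support, g ∈ M := by
    intro g hg
    rw [Finsupp.mem_support_iff] at hg
    by_contra hgM
    apply hg
    have happ : y.coeff g = ∑ x : G ⧸ M, ((cpt f x y) ^ p ^ n).coeff g := by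
      conv_lhs => rw [hypow]
      rw [MonoidAlgebra.coeff_sum]
      exact Finsupp.finset_sum_apply _ _ _
    rw [happ]
    apply Finset.sum_eq_zero
    intro x _
    rw [← Finsupp.notMem_support_iff]
    intro hmem
    apply hgM
    have hmem' : g ∈ ((cpt f x y) ^ (m + 1)).coeff.support := by rw [← hm]; exact hmem
    have h1 : f g = x ^ (m + 1) := support_pow_fiber f (support_cpt f y x) m g hmem'
    have h2 : x ^ (m + 1) = 1 := by
      rw [← hm, ← hn]
      exact pow_card_eq_one
    rw [h2] at h1
    exact (QuotientGroup.eq_one_iff g).mp h1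
  obtain ⟨y', hy'⟩ := exists_preimage_of_support M y hysupp
  have hinj : Function.Injective (MonoidAlgebra.mapDomainRingHom k (M := ↥M) M.subtype) :=
    mapDomain_injective' M
  have hyw : ∀ w : MonoidAlgebra k ↥M, y * MonoidAlgebra.mapDomainRingHom k M.subtype w
      = MonoidAlgebra.mapDomainRingHom k M.subtype w * y := by
    intro w
    have hcw : C * MonoidAlgebra.mapDomainRingHom k M.subtype w
        = MonoidAlgebra.mapDomainRingHom k M.subtype w * C := by
      rw [hC, ← map_mul, ← map_mul, ← cent' hc.1 w]
    have h1 : z * C * MonoidAlgebra.mapDomainRingHom k M.subtype w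
        = MonoidAlgebra.mapDomainRingHom k M.subtype w * (z * C) := by
      rw [mul_assoc, hcw, ← mul_assoc,
        ← cent' hz (MonoidAlgebra.mapDomainRingHom k M.subtype w), mul_assoc]
    exact h1
  have hy'c : y' ∈ Set.center (MonoidAlgebra k ↥M) := by
    rw [Semigroup.mem_center_iff]
    intro w
    apply hinj
    rw [map_mul, map_mul, hy']
    exact (hyw w).symm
  have hy'i : IsIdempotentElem y' := hinj (by rw [map_mul, hy']; exact hyi)
  have hCy : y * C = y := by
    have h1 : z * C * C = z * C := by rw [mul_assoc, hCC]
    exact h1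
  have hy'mul : y' * c = y' := hinj (by rw [map_mul, hy']; exact hCy)
  have hcy' : c * y' = y' := (cent' hc.1 y').symm.trans hy'mul
  have hsub_i : IsIdempotentElem (c - y') := by
    have h1 : (c - y') * (c - y') = c - y' := by
      rw [mul_sub, sub_mul, sub_mul, hc.2.1, hy'mul, hcy', hy'i]
      abel
    exact h1
  have horth : y' * (c - y') = 0 := by
    rw [mul_sub, hy'mul, hy'i]
    abel
  rcases hc.2.2.2 y' (c - y') hy'c (sub_mem_center hc.1 hy'c) hy'i hsub_i horth (by abel)
    with h0 | h0
  · left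
    rw [← hy', h0, map_zero]
  · right
    have hcy : c = y' := sub_eq_zero.mp h0
    rw [← hy', ← hcy, hC]

end Ab

lemma center_map {R S : Type*} [Ring R] [Ring S] (f : R ≃+* S) {a : R}
    (ha : a ∈ Set.center R) : f a ∈ Set.center S := by
  rw [Semigroup.mem_center_iff]
  intro s
  obtain ⟨r, rfl⟩ := f.surjective s
  rw [← map_mul, ← map_mul, cent' ha r]

/-- blockhood transfers along ring isomorphisms -/
lemma IsBlockOf.map {R S : Type*} [Ring R] [Ring S] (f : R ≃+* S) {b : R}
    (h : IsBlockOf R b) : IsBlockOf S (f b) := by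
  obtain ⟨hc, hi, hn, hp⟩ := h
  refine ⟨center_map f hc, ?_, ?_, ?_⟩
  · rw [IsIdempotentElem, ← map_mul, hi]
  · intro h0
    exact hn (f.injective (by rw [h0, map_zero]))
  · intro e g hec hgc hei hgi heg hsum
    have hei' : IsIdempotentElem (f.symm e) := by
      rw [IsIdempotentElem, ← map_mul, hei]
    have hgi' : IsIdempotentElem (f.symm g) := by
      rw [IsIdempotentElem, ← map_mul, hgi]
    have heg' : f.symm e * f.symm g = 0 := by
      rw [← map_mul, heg, map_zero]
    have hsum' : b = f.symm e + f.symm g := by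
      apply f.injective
      rw [map_add, f.apply_symm_apply, f.apply_symm_apply]
      exact hsum
    have hec' := center_map f.symm hec
    have hgc' := center_map f.symm hgc
    rcases hp _ _ hec' hgc' hei' hgi' heg' hsum' with h0 | h0
    · left
      have := congrArg f h0
      rwa [f.apply_symm_apply, map_zero] at this
    · right
      have := congrArg f h0
      rwa [f.apply_symm_apply, map_zero] at this

lemma multiset_sum_mul {R : Type*} [Ring R] (l : Multiset R) (v : R) :
    l.sum * v = (l.map (fun d => d * v)).sum := by
  induction l using Multiset.induction with
  | empty => simp
  | cons a s ih => simp [add_mul, ih]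

lemma multiset_sum_eq_zero {R : Type*} [Ring R] (l : Multiset R)
    (h : ∀ x ∈ l, x = (0:R)) : l.sum = 0 := by
  induction l using Multiset.induction with
  | empty => simp
  | cons a s ih =>
      rw [Multiset.sum_cons, h a (Multiset.mem_cons_self a s), zero_add]
      exact ih (fun x hx => h x (Multiset.mem_cons_of_mem hx))

/-- get some block acting nontrivially -/
lemma exists_block_ne_zero (k : Type*) [Field k] (R : Type*) [Ring R] [Algebra k R]
    [FiniteDimensional k R] (v : R) (hv : v ≠ 0) :
    ∃ d : R, IsBlockOf R d ∧ d * v ≠ 0 := by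
  obtain ⟨l, hl, hsum⟩ := exists_blocks_sum_one k R
  by_contra hcon
  push_neg at hcon
  apply hv
  have h1 : v = l.sum * v := by rw [hsum, one_mul]
  rw [h1, multiset_sum_mul]
  apply multiset_sum_eq_zero
  intro x hx
  rw [Multiset.mem_map] at hx
  obtain ⟨d, hd, rfl⟩ := hx
  exact hcon d (hl d hd)

lemma finiteDimensional_monoidAlgebra (k : Type*) [Field k] (G : Type*) [Group G] [Fintype G] :
    FiniteDimensional k (MonoidAlgebra k G) :=
  Module.Finite.equiv ((Finsupp.linearEquivFunOnFinite k k G).symm.trans (MonoidAlgebra.coeffLinearEquiv k).symm)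

section Induction

universe u

variable {k : Type v} [Field k]

/-- central idempotents act as 0 or 1 on blocks of normal subgroups with p-group quotient -/
lemma covering_idem (p : ℕ) [Fact p.Prime] [CharP k p] :
    ∀ (n : ℕ) (G : Type u) [Group G] [Fintype G] (N : Subgroup G) [N.Normal],
      Nat.card (G ⧸ N) ≤ n → IsPGroup p (G ⧸ N) →
      ∀ b : MonoidAlgebra k ↥N, IsBlockOf _ b →
      ∀ z : MonoidAlgebra k G, z ∈ Set.center (MonoidAlgebra k G) → IsIdempotentElem z →
        z * MonoidAlgebra.mapDomainRingHom k N.subtype b = 0 ∨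
        z * MonoidAlgebra.mapDomainRingHom k N.subtype b
          = MonoidAlgebra.mapDomainRingHom k N.subtype b := by
  intro n
  induction n with
  | zero =>
      intro G _ _ N _ hcard _ _ _ _ _ _
      have := Nat.card_pos (α := G ⧸ N)
      omega
  | succ n IH =>
      intro G _ _ N _ hcard hquot b hb z hz hzi
      by_cases hcomm : ∀ a b' : G ⧸ N, a * b' = b' * a
      · exact abelian_step p N hcomm hquot b hb z hz hzi
      -- nonabelian case
      set K := commutator (G ⧸ N) with hK
      have hKne : K ≠ ⊤ := by
        intro htop
        have hnil : Group.IsNilpotent (G ⧸ N) := hquot.isNilpotent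
        obtain ⟨m, hm⟩ := nilpotent_iff_lowerCentralSeries.mp hnil
        have hall : ∀ j, Subgroup.lowerCentralSeries (⊤ : Subgroup (G ⧸ N)) j = ⊤ := by
          intro j
          induction j with
          | zero => exact Subgroup.lowerCentralSeries_zero _
          | succ j ih =>
              rw [Subgroup.lowerCentralSeries_succ, ih]
              exact htop
        apply hcomm
        intro a b'
        have h1 : ∀ x : G ⧸ N, x = 1 := by
          intro x
          have : x ∈ Subgroup.lowerCentralSeries (⊤ : Subgroup (G ⧸ N)) m := by
            rw [hall m]; exact Subgroup.mem_top x
          rw [hm] at this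
          exact Subgroup.mem_bot.mp this
        rw [h1 a, h1 b']
      set M : Subgroup G := K.comap (QuotientGroup.mk' N) with hM
      have hNM : N ≤ M := by
        intro g hg
        rw [hM, Subgroup.mem_comap]
        have h1 : (QuotientGroup.mk' N) g = 1 := (QuotientGroup.eq_one_iff g).mpr hg
        rw [h1]
        exact K.one_mem
      set N' : Subgroup ↥M := N.subgroupOf M with hN'
      haveI : Fintype ↥M := Fintype.ofFinite _
      -- p-group properties
      have hPG_MN : IsPGroup p (↥M ⧸ N') := by
        intro x
        refine QuotientGroup.induction_on x ?_
        intro m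
        obtain ⟨j, hj⟩ := hquot (QuotientGroup.mk (m : G))
        refine ⟨j, ?_⟩
        have h2 : ((m ^ p ^ j : ↥M) : G) = (m : G) ^ p ^ j := rfl
        show (QuotientGroup.mk (m ^ p ^ j) : ↥M ⧸ N') = 1
        rw [QuotientGroup.eq_one_iff, hN', Subgroup.mem_subgroupOf, h2,
          ← QuotientGroup.eq_one_iff ((m : G) ^ p ^ j)]
        exact hj
      have hPG_GM : IsPGroup p (G ⧸ M) := by
        intro x
        refine QuotientGroup.induction_on x ?_
        intro g
        obtain ⟨j, hj⟩ := hquot (QuotientGroup.mk g)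
        refine ⟨j, ?_⟩
        show (QuotientGroup.mk (g ^ p ^ j) : G ⧸ M) = 1
        rw [QuotientGroup.eq_one_iff]
        apply hNM
        rw [← QuotientGroup.eq_one_iff (g ^ p ^ j)]
        exact hj
      -- abelian quotient G/M
      have hcommM : ∀ a b' : G ⧸ M, a * b' = b' * a := by
        intro a b'
        refine QuotientGroup.induction_on a ?_
        intro g
        refine QuotientGroup.induction_on b' ?_
        intro h
        rw [← QuotientGroup.mk_mul, ← QuotientGroup.mk_mul]
        rw [QuotientGroup.eq]
        open commutatorElement in
        have h1 : (g * h)⁻¹ * (h * g) = ⁅h⁻¹, g⁻¹⁆ := by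
          rw [commutatorElement_def]
          group
        rw [h1, hM, Subgroup.mem_comap, map_commutatorElement]
        exact Subgroup.commutator_mem_commutator (Subgroup.mem_top _) (Subgroup.mem_top _)
      -- cardinality decreases
      have hcard' : Nat.card (↥M ⧸ N') ≤ n := by
        have hmemK : ∀ m : ↥M, (QuotientGroup.mk' N) (m : G) ∈ K := fun m => m.2
        set φ : ↥M →* ↥K :=
          MonoidHom.codRestrict ((QuotientGroup.mk' N).comp M.subtype) K
            (fun m => hmemK m) with hφ
        have hker : φ.ker = N' := by
          ext m
          rw [MonoidHom.mem_ker, hN', Subgroup.mem_subgroupOf]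
          constructor
          · intro h1
            have h2 : (QuotientGroup.mk' N) (m : G) = 1 := congrArg Subtype.val h1
            exact (QuotientGroup.eq_one_iff (m : G)).mp h2
          · intro h1
            apply Subtype.ext
            exact (QuotientGroup.eq_one_iff (m : G)).mpr h1
        have hcongr : Nat.card (↥M ⧸ N') = Nat.card (↥M ⧸ φ.ker) :=
          Nat.card_congr (QuotientGroup.quotientMulEquivOfEq hker.symm).toEquiv
        have hle1 : Nat.card (↥M ⧸ φ.ker) ≤ Nat.card ↥K :=
          Nat.card_le_card_of_injective _ (QuotientGroup.kerLift_injective φ)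
        have hle2 : Nat.card ↥K < Nat.card (G ⧸ N) := by
          refine lt_of_le_of_ne (Subgroup.card_le_card_group K) (fun h => hKne ?_)
          exact Subgroup.eq_top_of_card_eq K h
        omega
      -- transport the block b
      set e : ↥N' ≃* ↥N := Subgroup.subgroupOfEquivOfLe hNM with he
      set b' : MonoidAlgebra k ↥N' := (MonoidAlgebra.domCongr k k e.symm) b with hb'def
      have hb' : IsBlockOf _ b' :=
        IsBlockOf.map (MonoidAlgebra.domCongr k k e.symm).toRingEquiv hb
      -- compatibility of the embeddings
      have hcompat : (MonoidAlgebra.mapDomainRingHom k N.subtype b : MonoidAlgebra k G)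
          = MonoidAlgebra.mapDomainRingHom k M.subtype
              (MonoidAlgebra.mapDomainRingHom k N'.subtype b') := by
        have h1 : (b' : MonoidAlgebra k ↥N').coeff = Finsupp.mapDomain (⇑e.symm) b.coeff := by
          rw [hb'def]
          have h2 : ((MonoidAlgebra.domCongr k k e.symm) b : MonoidAlgebra k ↥N').coeff
              = Finsupp.equivMapDomain (e.symm : ↥N ≃ ↥N') b.coeff := by
            ext g'
            rw [MonoidAlgebra.coeff_domCongr]
            rw [Finsupp.equivMapDomain_apply]
            rfl
          rw [h2, Finsupp.equivMapDomain_eq_mapDomain]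
          rfl
        have hru : ∀ (H : Subgroup G) (v : MonoidAlgebra k ↥H),
            (MonoidAlgebra.mapDomainRingHom k H.subtype v : MonoidAlgebra k G).coeff
            = Finsupp.mapDomain (⇑H.subtype) v.coeff := fun _ _ => rfl
        have hru2 : ∀ (v : MonoidAlgebra k ↥N'),
            (MonoidAlgebra.mapDomainRingHom k N'.subtype v : MonoidAlgebra k ↥M).coeff
            = Finsupp.mapDomain (⇑N'.subtype) v.coeff := fun _ => rfl
        apply MonoidAlgebra.coeff_injective
        rw [hru, hru, hru2, h1, ← Finsupp.mapDomain_comp, ← Finsupp.mapDomain_comp]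
        congr 1
      -- find the unique block of kM acting as identity on b'
      haveI : FiniteDimensional k (MonoidAlgebra k ↥M) := finiteDimensional_monoidAlgebra k ↥M
      have hb'ne : (MonoidAlgebra.mapDomainRingHom k N'.subtype b' : MonoidAlgebra k ↥M)
          ≠ 0 := by
        intro h0
        exact hb'.2.2.1 (mapDomain_injective' N' (by rw [h0, map_zero]))
      obtain ⟨c, hcblock, hcne⟩ := exists_block_ne_zero k (MonoidAlgebra k ↥M)
        (MonoidAlgebra.mapDomainRingHom k N'.subtype b') hb'ne
      have hceq : c * MonoidAlgebra.mapDomainRingHom k N'.subtype b'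
          = MonoidAlgebra.mapDomainRingHom k N'.subtype b' := by
        rcases IH ↥M N' hcard' hPG_MN b' hb' c hcblock.1 hcblock.2.1 with h0 | h0
        · exact absurd h0 hcne
        · exact h0
      -- apply the abelian step to the pair (G, M)
      have habs := abelian_step p M hcommM hPG_GM c hcblock z hz hzi
      have hfactor : (MonoidAlgebra.mapDomainRingHom k N.subtype b : MonoidAlgebra k G)
          = MonoidAlgebra.mapDomainRingHom k M.subtype c
            * MonoidAlgebra.mapDomainRingHom k N.subtype b := by
        conv_lhs => rw [hcompat, ← hceq]
        rw [map_mul, hcompat]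
      rcases habs with h0 | h0
      · left
        rw [hfactor, ← mul_assoc, h0, zero_mul]
      · right
        conv_lhs => rw [hfactor]
        rw [← mul_assoc, h0, ← hfactor]

end Induction
end BlockAux

open BlockAux in
theorem unique_covering_block_of_pGroup_quotient
    (p : ℕ) [Fact p.Prime] (k : Type*) [Field k] [CharP k p] [IsAlgClosed k]
    (G : Type*) [Group G] [Fintype G] (N : Subgroup G) [N.Normal]
    (hquot : IsPGroup p (G ⧸ N))
    (b : MonoidAlgebra k ↥N) (hb : IsBlockOf _ b) :
    ∃! d : MonoidAlgebra k G,
      IsBlockOf _ d ∧ d * MonoidAlgebra.mapDomainRingHom k N.subtype b ≠ 0 := by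
  haveI : FiniteDimensional k (MonoidAlgebra k G) := finiteDimensional_monoidAlgebra k G
  have hbne : (MonoidAlgebra.mapDomainRingHom k N.subtype b : MonoidAlgebra k G) ≠ 0 := by
    intro h0
    exact hb.2.2.1 (mapDomain_injective' N (by rw [h0, map_zero]))
  obtain ⟨d, hdblock, hdne⟩ := exists_block_ne_zero k (MonoidAlgebra k G)
    (MonoidAlgebra.mapDomainRingHom k N.subtype b) hbne
  have hact : ∀ d' : MonoidAlgebra k G, IsBlockOf _ d' →
      d' * MonoidAlgebra.mapDomainRingHom k N.subtype b ≠ 0 →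
      d' * MonoidAlgebra.mapDomainRingHom k N.subtype b
        = MonoidAlgebra.mapDomainRingHom k N.subtype b := by
    intro d' hd' hne'
    rcases covering_idem p (Nat.card (G ⧸ N)) G N le_rfl hquot b hb d' hd'.1 hd'.2.1
      with h0 | h0
    · exact absurd h0 hne'
    · exact h0
  refine ⟨d, ⟨hdblock, hdne⟩, ?_⟩
  rintro d' ⟨hd'block, hd'ne⟩
  apply block_eq_of_mul_ne_zero hd'block hdblock
  intro h0
  apply hbne
  have h1 : d' * d * MonoidAlgebra.mapDomainRingHom k N.subtype b
      = MonoidAlgebra.mapDomainRingHom k N.subtype b := by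
    rw [mul_assoc, hact d hdblock hdne, hact d' hd'block hd'ne]
  rw [h0, zero_mul] at h1
  exact h1.symm
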